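/- Let j ≥ 2, let f : ∂Q^j → N be a map to a metric space N, let A ⊆ ∂Q^j be nonempty, and let A* = { t·x : x ∈ A, t ∈ [0,1] } be the cone over A. Define F : Q^j \ {0} → N by F(x) = f(x/|x|_∞). Then sup_{x ∈ Q^j \ {0}} dist(x, A*) · Lip F(x) ≤ √j · sup_{y ∈ ∂Q^j} dist(y, A) · Lip f(y). -/

import Mathlib

open Filter
open scoped ENNReal

noncomputable def supNorm {j : ℕ} (x : EuclideanSpace ℝ (Fin j)) : ℝ :=
  ‖(WithLp.equiv 2 (Fin j → ℝ)) x‖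


noncomputable def lipNumOn {E N : Type*} [PseudoEMetricSpace E] [PseudoEMetricSpace N]
    (f : E → N) (s : Set E) (x : E) : ℝ≥0∞ :=
  Filter.limsup (fun y => edist (f y) (f x) / edist y x) (nhdsWithin x (s \ {x}))

variable {j : ℕ}

lemma supNorm_nonneg (x : EuclideanSpace ℝ (Fin j)) : 0 ≤ supNorm x := norm_nonneg _

lemma supNorm_eq_zero {x : EuclideanSpace ℝ (Fin j)} : supNorm x = 0 ↔ x = 0 := by
  rw [supNorm, norm_eq_zero]
  constructor
  · intro h
    have : (WithLp.equiv 2 (Fin j → ℝ)) x = (WithLp.equiv 2 (Fin j → ℝ)) 0 := by simpa using h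
    exact (WithLp.equiv 2 (Fin j → ℝ)).injective this
  · rintro rfl; simp

lemma supNorm_smul (c : ℝ) (x : EuclideanSpace ℝ (Fin j)) :
    supNorm (c • x) = |c| * supNorm x := by
  rw [supNorm, WithLp.equiv_apply, WithLp.ofLp_smul, norm_smul, Real.norm_eq_abs, supNorm,
    WithLp.equiv_apply]

lemma coord_le_supNorm (x : EuclideanSpace ℝ (Fin j)) (i : Fin j) : |x i| ≤ supNorm x := by
  simpa [supNorm] using norm_le_pi_norm ((WithLp.equiv 2 (Fin j → ℝ)) x) i

lemma exists_coord_eq_supNorm (hj : 0 < j) (x : EuclideanSpace ℝ (Fin j)) :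
    ∃ i, |x i| = supNorm x := by
  haveI : Nonempty (Fin j) := ⟨⟨0, hj⟩⟩
  obtain ⟨i, -, hi⟩ := Finset.exists_mem_eq_sup (Finset.univ : Finset (Fin j))
    Finset.univ_nonempty (fun b => ‖(WithLp.equiv 2 (Fin j → ℝ)) x b‖₊)
  refine ⟨i, ?_⟩
  rw [supNorm, Pi.norm_def, hi]
  rw [coe_nnnorm, Real.norm_eq_abs]
  rfl

lemma coord_le_norm (x : EuclideanSpace ℝ (Fin j)) (i : Fin j) : |x i| ≤ ‖x‖ := by
  rw [EuclideanSpace.norm_eq]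
  rw [show |x i| = Real.sqrt (|x i|^2) from (Real.sqrt_sq (abs_nonneg _)).symm]
  apply Real.sqrt_le_sqrt
  rw [sq_abs]
  calc x i ^ 2 = ∑ m ∈ {i}, x m ^ 2 := by simp
  _ ≤ ∑ m, x m ^ 2 := Finset.sum_le_sum_of_subset_of_nonneg (Finset.subset_univ _)
      (fun m _ _ => sq_nonneg _)
  _ = ∑ m, ‖x m‖ ^ 2 := Finset.sum_congr rfl (fun m _ => by rw [Real.norm_eq_abs, sq_abs])

lemma supNorm_le_norm (hj : 0 < j) (x : EuclideanSpace ℝ (Fin j)) : supNorm x ≤ ‖x‖ := by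
  obtain ⟨i, hi⟩ := exists_coord_eq_supNorm hj x
  rw [← hi]; exact coord_le_norm x i

lemma abs_supNorm_sub (hj : 0 < j) (x y : EuclideanSpace ℝ (Fin j)) :
    |supNorm x - supNorm y| ≤ ‖x - y‖ := by
  have h := abs_norm_sub_norm_le ((WithLp.equiv 2 (Fin j → ℝ)) x) ((WithLp.equiv 2 (Fin j → ℝ)) y)
  calc |supNorm x - supNorm y| ≤ supNorm (x - y) := by
        simpa [supNorm] using h
  _ ≤ ‖x - y‖ := supNorm_le_norm hj _


lemma scalar_core {J a t e S1 S2 S3 : ℝ} (hJ : 2 ≤ J) (ht : 0 ≤ t) (hS1 : 0 ≤ S1)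
    (hS3 : 0 ≤ S3) (hCS : S2^2 ≤ S1*S3) (hS3le : S3 ≤ J - 1) (ht2 : t^2 ≤ a^2)
    (hfirst : (a + t*e)^2 ≤ a^2 - t^2) :
    (a + t*e)^2 + (S1 + 2*t*S2 + t^2*S3) ≤ J*(a^2 + S1) := by
  set W := Real.sqrt S1 with hWdef
  set V := Real.sqrt S3 with hVdef
  have hW2 : W^2 = S1 := Real.sq_sqrt hS1
  have hV2 : V^2 = S3 := Real.sq_sqrt hS3
  have hWn : 0 ≤ W := Real.sqrt_nonneg _
  have hVn : 0 ≤ V := Real.sqrt_nonneg _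
  have hS2le : S2 ≤ W * V := by
    calc S2 ≤ |S2| := le_abs_self _
    _ = Real.sqrt (S2^2) := (Real.sqrt_sq_eq_abs _).symm
    _ ≤ Real.sqrt (S1 * S3) := Real.sqrt_le_sqrt hCS
    _ = W * V := Real.sqrt_mul hS1 _
  set c := Real.sqrt (J - 1) with hcdef
  have hc : 0 < c := Real.sqrt_pos.2 (by linarith)
  have hc2 : c^2 = J - 1 := Real.sq_sqrt (by linarith)
  have hVc : V^2 ≤ c^2 := by rw [hV2, hc2]; exact hS3le
  have key2 : 2*t*S2 ≤ t^2 + (J-1)*W^2 := by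
    have h1 : 2*t*S2 ≤ 2*t*(W*V) := by
      have := mul_le_mul_of_nonneg_left hS2le (by linarith : (0:ℝ) ≤ 2*t)
      linarith
    have h2 : 2*(t*V/c)*(c*W) ≤ (t*V/c)^2 + (c*W)^2 := by nlinarith [sq_nonneg (t*V/c - c*W)]
    have h3 : 2*(t*V/c)*(c*W) = 2*t*(W*V) := by field_simp
    have h4 : (t*V/c)^2 ≤ t^2 := by
      rw [div_pow, div_le_iff₀ (by positivity), mul_pow]
      exact mul_le_mul_of_nonneg_left hVc (sq_nonneg t)
    have h5 : (c*W)^2 = (J-1)*W^2 := by rw [mul_pow, hc2]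
    linarith
  have htV : t^2*S3 ≤ (J-1)*t^2 := by nlinarith [sq_nonneg t]
  nlinarith [hfirst, key2, htV, ht2, hS1, hW2, sq_nonneg W]



lemma normsq_eq (v : EuclideanSpace ℝ (Fin j)) : ‖v‖^2 = ∑ i, (v i)^2 := by
  rw [EuclideanSpace.norm_eq, Real.sq_sqrt (by positivity)]
  exact Finset.sum_congr rfl (fun m _ => by rw [Real.norm_eq_abs, sq_abs])

lemma core_ineq (hj : 2 ≤ j) (d u' : EuclideanSpace ℝ (Fin j)) (t : ℝ) (ht : 0 ≤ t)
    (hu' : ∀ m, |u' m| ≤ 1) (k : Fin j) (htd : t ≤ |d k|) (hk1 : |u' k| = 1)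
    (hsign : d k * u' k ≤ -t) : ‖d + t • u'‖^2 ≤ j * ‖d‖^2 := by
  have happ : ∀ m, (d + t • u') m = d m + t * u' m := fun m => rfl
  rw [normsq_eq, normsq_eq]
  have hsplit : ∀ (g : Fin j → ℝ), ∑ m, g m = g k + ∑ m ∈ Finset.univ.erase k, g m :=
    fun g => (Finset.add_sum_erase _ g (Finset.mem_univ k)).symm
  rw [hsplit fun m => ((d + t • u') m)^2, hsplit fun m => (d m)^2]
  simp only [happ]
  have hexp : ∑ m ∈ Finset.univ.erase k, (d m + t * u' m)^2 =
      (∑ m ∈ Finset.univ.erase k, (d m)^2) + 2*t*(∑ m ∈ Finset.univ.erase k, d m * u' m)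
        + t^2*(∑ m ∈ Finset.univ.erase k, (u' m)^2) := by
    rw [Finset.mul_sum, Finset.mul_sum, ← Finset.sum_add_distrib, ← Finset.sum_add_distrib]
    exact Finset.sum_congr rfl (fun m _ => by ring)
  rw [hexp, mul_add]
  have hS1 : (0:ℝ) ≤ ∑ m ∈ Finset.univ.erase k, (d m)^2 :=
    Finset.sum_nonneg fun m _ => sq_nonneg _
  have hS3 : (0:ℝ) ≤ ∑ m ∈ Finset.univ.erase k, (u' m)^2 :=
    Finset.sum_nonneg fun m _ => sq_nonneg _
  have hCS : (∑ m ∈ Finset.univ.erase k, d m * u' m)^2 ≤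
      (∑ m ∈ Finset.univ.erase k, (d m)^2) * (∑ m ∈ Finset.univ.erase k, (u' m)^2) :=
    Finset.sum_mul_sq_le_sq_mul_sq _ _ _
  have hS3le : (∑ m ∈ Finset.univ.erase k, (u' m)^2) ≤ (j:ℝ) - 1 := by
    have hone : ∀ m ∈ Finset.univ.erase k, (u' m)^2 ≤ 1 := fun m _ => by
      have := hu' m; nlinarith [abs_nonneg (u' m), sq_abs (u' m)]
    calc (∑ m ∈ Finset.univ.erase k, (u' m)^2) ≤ ∑ m ∈ Finset.univ.erase k, (1:ℝ) :=
          Finset.sum_le_sum hone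
    _ = ((j:ℝ) - 1) := by
        rw [Finset.sum_const, Finset.card_erase_of_mem (Finset.mem_univ k)]
        have h1 : (1:ℕ) ≤ j := le_trans (by norm_num) hj
        rw [Finset.card_univ, Fintype.card_fin, nsmul_eq_mul, mul_one, Nat.cast_sub h1,
          Nat.cast_one]
  have hfirst : (d k + t * u' k)^2 ≤ (d k)^2 - t^2 := by
    have h1 : (u' k)^2 = 1 := by rw [← sq_abs, hk1]; norm_num
    nlinarith [hsign, ht]
  have hDk : t^2 ≤ (d k)^2 := by nlinarith [abs_nonneg (d k), sq_abs (d k), htd, ht]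
  have hJ : (2:ℝ) ≤ (j:ℝ) := by exact_mod_cast hj
  have := scalar_core hJ ht hS1 hS3 hCS hS3le hDk hfirst
  linarith

lemma piLip_onesided (hj : 2 ≤ j) {x x' : EuclideanSpace ℝ (Fin j)} (hx : x ≠ 0) (hx' : x' ≠ 0)
    (hle : supNorm x ≤ supNorm x') :
    ‖(supNorm x)⁻¹ • x - (supNorm x')⁻¹ • x'‖ * supNorm x ≤ Real.sqrt j * ‖x - x'‖ := by
  have hj0 : 0 < j := lt_of_lt_of_le (by norm_num) hj
  have hr : 0 < supNorm x := lt_of_le_of_ne (supNorm_nonneg x) (fun h => hx (supNorm_eq_zero.1 h.symm))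
  have hr' : 0 < supNorm x' := lt_of_le_of_ne (supNorm_nonneg x') (fun h => hx' (supNorm_eq_zero.1 h.symm))
  obtain ⟨k, hk⟩ := exists_coord_eq_supNorm hj0 x'
  set r := supNorm x with hrdef
  set r' := supNorm x' with hr'def
  set u : EuclideanSpace ℝ (Fin j) := r⁻¹ • x with hudef
  set u' : EuclideanSpace ℝ (Fin j) := r'⁻¹ • x' with hu'def
  set d : EuclideanSpace ℝ (Fin j) := x - x' with hddef
  set t : ℝ := r' - r with htdef
  have hru : r • u = x := smul_inv_smul₀ hr.ne' x
  have hru' : r' • u' = x' := smul_inv_smul₀ hr'.ne' x'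
  have hu'k : u' k = r'⁻¹ * x' k := rfl
  have hdk : d k = x k - x' k := rfl
  have hk2 : |x' k| = r' := hk
  have hxk : |x k| ≤ r := coord_le_supNorm x k
  have hu'sup : supNorm u' = 1 := by
    rw [hu'def, supNorm_smul, abs_of_pos (inv_pos.2 hr'), ← hr'def, inv_mul_cancel₀ hr'.ne']
  clear_value r r' u u' d t
  clear hk
  have ht : 0 ≤ t := by rw [htdef]; linarith
  have hvec : d + t • u' = r • (u - u') := by
    rw [hddef, htdef, smul_sub, hru, sub_smul, hru']
    abel
  have hnorm_eq : ‖u - u'‖ * r = ‖d + t • u'‖ := by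
    rw [hvec, norm_smul, Real.norm_eq_abs, abs_of_pos hr, mul_comm]
  have hu'le : ∀ m, |u' m| ≤ 1 := fun m => by
    rw [← hu'sup]; exact coord_le_supNorm u' m
  have hk1 : |u' k| = 1 := by
    rw [hu'k, abs_mul, abs_of_pos (inv_pos.2 hr'), hk2, inv_mul_cancel₀ hr'.ne']
  have htd : t ≤ |d k| := by
    have h2 : |x' k| - |x k| ≤ |x' k - x k| := abs_sub_abs_le_abs_sub _ _
    have h3 : |x' k - x k| = |d k| := by rw [hdk, abs_sub_comm]
    rw [htdef]
    linarith
  have hsign : d k * u' k ≤ -t := by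
    have h4 : x k * x' k ≤ r * r' := by
      calc x k * x' k ≤ |x k * x' k| := le_abs_self _
      _ = |x k| * |x' k| := abs_mul _ _
      _ ≤ r * r' := by rw [hk2]; exact mul_le_mul_of_nonneg_right hxk hr'.le
    have h5 : x' k * x' k = r' * r' := by
      have h6 := sq_abs (x' k); rw [hk2] at h6
      nlinarith [h6]
    rw [hdk, hu'k, htdef, sub_mul]
    have e1 : x k * (r'⁻¹ * x' k) ≤ r := by
      rw [show x k * (r'⁻¹ * x' k) = (x k * x' k) * r'⁻¹ by ring]
      calc (x k * x' k) * r'⁻¹ ≤ (r * r') * r'⁻¹ :=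
        mul_le_mul_of_nonneg_right h4 (inv_pos.2 hr').le
      _ = r := by field_simp
    have e2 : x' k * (r'⁻¹ * x' k) = r' := by
      rw [show x' k * (r'⁻¹ * x' k) = (x' k * x' k) * r'⁻¹ by ring, h5]
      field_simp
    linarith
  have hcore := core_ineq hj d u' t ht hu'le k htd hk1 hsign
  have hnn : 0 ≤ ‖d + t • u'‖ := norm_nonneg _
  have hless : ‖d + t • u'‖ ≤ Real.sqrt j * ‖d‖ := by
    have h6 : ‖d + t • u'‖ = Real.sqrt (‖d + t • u'‖^2) := (Real.sqrt_sq hnn).symm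
    rw [h6]
    calc Real.sqrt (‖d + t • u'‖^2) ≤ Real.sqrt ((j:ℝ) * ‖d‖^2) := Real.sqrt_le_sqrt hcore
    _ = Real.sqrt j * ‖d‖ := by
        rw [Real.sqrt_mul (Nat.cast_nonneg j), Real.sqrt_sq (norm_nonneg d)]
  rw [hnorm_eq]
  exact hless

lemma piLip (hj : 2 ≤ j) {x x' : EuclideanSpace ℝ (Fin j)} (hx : x ≠ 0) (hx' : x' ≠ 0) :
    ‖(supNorm x)⁻¹ • x - (supNorm x')⁻¹ • x'‖ * min (supNorm x) (supNorm x') ≤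
      Real.sqrt j * ‖x - x'‖ := by
  rcases le_total (supNorm x) (supNorm x') with h | h
  · rw [min_eq_left h]
    exact piLip_onesided hj hx hx' h
  · rw [min_eq_right h]
    have := piLip_onesided hj hx' hx h
    rw [norm_sub_rev ((supNorm x')⁻¹ • x'), norm_sub_rev x' x] at this
    exact this

lemma supNorm_pos {x : EuclideanSpace ℝ (Fin j)} (hx : x ≠ 0) : 0 < supNorm x :=
  lt_of_le_of_ne (supNorm_nonneg x) (fun h => hx (supNorm_eq_zero.1 h.symm))

lemma supNorm_unit {x : EuclideanSpace ℝ (Fin j)} (hx : x ≠ 0) :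
    supNorm ((supNorm x)⁻¹ • x) = 1 := by
  rw [supNorm_smul, abs_of_pos (inv_pos.2 (supNorm_pos hx)), inv_mul_cancel₀ (supNorm_pos hx).ne']

lemma lip_bound (hj : 2 ≤ j) {N : Type*} [MetricSpace N]
    (f F : EuclideanSpace ℝ (Fin j) → N)
    (hF : ∀ x : EuclideanSpace ℝ (Fin j), x ≠ 0 → F x = f ((supNorm x)⁻¹ • x))
    {x : EuclideanSpace ℝ (Fin j)} (hx0 : x ≠ 0) :
    lipNumOn F {y | supNorm y ≤ 1 ∧ y ≠ 0} x ≤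
      ENNReal.ofReal (Real.sqrt j / supNorm x) *
        lipNumOn f {z | supNorm z = 1} ((supNorm x)⁻¹ • x) := by
  have hj0 : 0 < j := lt_of_lt_of_le (by norm_num) hj
  have hsj : 0 < Real.sqrt j := Real.sqrt_pos.2 (by exact_mod_cast hj0)
  set S : Set (EuclideanSpace ℝ (Fin j)) := {y | supNorm y ≤ 1 ∧ y ≠ 0} with hSdef
  set B : Set (EuclideanSpace ℝ (Fin j)) := {z | supNorm z = 1} with hBdef
  have hr : 0 < supNorm x := supNorm_pos hx0
  set r := supNorm x with hrdef
  set u : EuclideanSpace ℝ (Fin j) := r⁻¹ • x with hudef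
  set L := lipNumOn f B u with hLdef
  have hux : (supNorm x)⁻¹ • x = u := by rw [hudef, hrdef]
  clear_value r u
  by_cases hL : L = ⊤
  · rw [hL, ENNReal.mul_top]
    · exact le_top
    · exact (ENNReal.ofReal_pos.2 (div_pos hsj hr)).ne'
  -- main case
  have key : ∀ δ : ℝ, 0 < δ →
      lipNumOn F S x ≤ ENNReal.ofReal ((L.toReal + δ) * (Real.sqrt j / r + δ)) := by
    intro δ hδ
    have hLtR : (0:ℝ) ≤ L.toReal := ENNReal.toReal_nonneg
    set b := ENNReal.ofReal (L.toReal + δ) with hbdef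
    have hLb : L < b := by
      rw [hbdef]
      rw [ENNReal.lt_ofReal_iff_toReal_lt hL]
      linarith
    set c := Real.sqrt j / r + δ with hcdef
    have hc0 : 0 < Real.sqrt j / r := div_pos hsj hr
    have hcpos : 0 < c := by rw [hcdef]; linarith
    have hcgt : Real.sqrt j < c * r := by
      rw [hcdef, add_mul, div_mul_cancel₀ _ hr.ne']
      nlinarith
    clear_value c
    -- eventually bound for f near u
    have hev1 : ∀ᶠ y' in nhdsWithin u (B \ {u}),
        edist (f y') (f u) / edist y' u < b :=
      Filter.eventually_lt_of_limsup_lt hLb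
    have hev2 : ∀ᶠ y' in nhds u, y' ∈ B \ {u} → edist (f y') (f u) / edist y' u < b := by
      rwa [eventually_nhdsWithin_iff] at hev1
    have hev3 : ∀ᶠ y' in nhds u, y' ∈ B → edist (f y') (f u) ≤ b * edist y' u := by
      filter_upwards [hev2] with y' h hyB
      by_cases hyu : y' = u
      · subst hyu; simp
      · have hq := h ⟨hyB, hyu⟩
        have hne : edist y' u ≠ 0 := (edist_pos.2 hyu).ne'
        have hfin : edist y' u ≠ ⊤ := edist_ne_top _ _
        calc edist (f y') (f u) = edist (f y') (f u) / edist y' u * edist y' u :=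
            (ENNReal.div_mul_cancel hne hfin).symm
        _ ≤ b * edist y' u := mul_le_mul_left hq.le _
    have hcont : ContinuousAt (fun z : EuclideanSpace ℝ (Fin j) => (supNorm z)⁻¹ • z) x := by
      have h1 : Continuous fun z : EuclideanSpace ℝ (Fin j) => supNorm z :=
        (PiLp.continuous_ofLp (p := 2) (β := fun _ : Fin j => ℝ)).norm
      have hrx : supNorm x ≠ 0 := by rw [← hrdef]; exact hr.ne'
      exact ((h1.continuousAt).inv₀ hrx).smul continuousAt_id
    have htend : Tendsto (fun z : EuclideanSpace ℝ (Fin j) => (supNorm z)⁻¹ • z)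
        (nhdsWithin x (S \ {x})) (nhds u) := by
      have h0 := hcont.tendsto
      rw [hux] at h0
      exact h0.mono_left nhdsWithin_le_nhds
    have hev4 : ∀ᶠ x' in nhdsWithin x (S \ {x}),
        ((supNorm x')⁻¹ • x') ∈ B →
          edist (f ((supNorm x')⁻¹ • x')) (f u) ≤ b * edist ((supNorm x')⁻¹ • x') u :=
      htend.eventually hev3
    set δ₂ := (c * r - Real.sqrt j) / (2 * c) with hδ₂def
    clear_value δ₂
    have hnum : 0 < c * r - Real.sqrt j := by linarith
    have h2c : (0:ℝ) < 2*c := by linarith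
    have hδ₂pos : 0 < δ₂ := hδ₂def ▸ div_pos hnum h2c
    have hδ₂r : δ₂ < r := by
      rw [hδ₂def, div_lt_iff₀ (by linarith : (0:ℝ) < 2*c)]
      nlinarith
    have hineq : Real.sqrt j ≤ c * (r - δ₂) := by
      have hc2 : c * (r - δ₂) = (c * r + Real.sqrt j) / 2 := by
        rw [hδ₂def]; field_simp; ring
      rw [hc2]; linarith
    have hev5 : ∀ᶠ x' in nhdsWithin x (S \ {x}), dist x' x < δ₂ := by
      apply Filter.Eventually.filter_mono nhdsWithin_le_nhds
      exact Filter.eventually_of_mem (Metric.ball_mem_nhds x hδ₂pos) (fun x' hx' => hx')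
    have hevS : ∀ᶠ x' in nhdsWithin x (S \ {x}), x' ∈ S \ {x} :=
      Filter.eventually_of_mem self_mem_nhdsWithin (fun _ h => h)
    have hev6 : ∀ᶠ x' in nhdsWithin x (S \ {x}),
        edist (F x') (F x) / edist x' x ≤ b * ENNReal.ofReal c := by
      filter_upwards [hev4, hev5, hevS] with x' h4 h5 hS'
      obtain ⟨⟨hsup', hne0⟩, hnex⟩ := hS'
      have hnex' : x' ≠ x := hnex
      have hr' : 0 < supNorm x' := supNorm_pos hne0
      have hu''B : ((supNorm x')⁻¹ • x') ∈ B := supNorm_unit hne0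
      have hFx' : F x' = f ((supNorm x')⁻¹ • x') := hF x' hne0
      have hFx : F x = f u := by rw [hF x hx0, hux]
      -- dist bound
      have hminb : r - δ₂ ≤ min r (supNorm x') := by
        have h6 : |r - supNorm x'| ≤ ‖x - x'‖ := by
          rw [hrdef]; exact abs_supNorm_sub hj0 x x'
        have h7 : ‖x - x'‖ = dist x' x := by rw [dist_comm, dist_eq_norm]
        rw [h7] at h6
        have h8 := abs_le.1 h6
        apply le_min (by linarith)
        linarith [h8.2]
      have hpi := piLip hj hx0 hne0
      rw [hux, ← hrdef] at hpi
      have hdistu : dist ((supNorm x')⁻¹ • x') u ≤ c * dist x' x := by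
        have h9 : dist ((supNorm x')⁻¹ • x') u = ‖u - (supNorm x')⁻¹ • x'‖ := by
          rw [dist_eq_norm, norm_sub_rev]
        have h10 : ‖x - x'‖ = dist x' x := by rw [dist_comm, dist_eq_norm]
        rw [h9]
        have h11 : ‖u - (supNorm x')⁻¹ • x'‖ * (r - δ₂) ≤ Real.sqrt j * dist x' x := by
          calc ‖u - (supNorm x')⁻¹ • x'‖ * (r - δ₂)
              ≤ ‖u - (supNorm x')⁻¹ • x'‖ * min r (supNorm x') :=
                mul_le_mul_of_nonneg_left hminb (norm_nonneg _)
          _ ≤ Real.sqrt j * ‖x - x'‖ := hpi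
          _ = Real.sqrt j * dist x' x := by rw [h10]
        have h12 : Real.sqrt j * dist x' x ≤ c * (r - δ₂) * dist x' x :=
          mul_le_mul_of_nonneg_right hineq dist_nonneg
        have hrδ : 0 < r - δ₂ := by linarith
        nlinarith [h11, h12]
      have hedist : edist (F x') (F x) ≤ b * ENNReal.ofReal c * edist x' x := by
        rw [hFx', hFx]
        calc edist (f ((supNorm x')⁻¹ • x')) (f u) ≤ b * edist ((supNorm x')⁻¹ • x') u :=
            h4 hu''B
        _ ≤ b * (ENNReal.ofReal c * edist x' x) := by
            apply mul_le_mul_right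
            rw [edist_dist, edist_dist, ← ENNReal.ofReal_mul hcpos.le]
            exact ENNReal.ofReal_le_ofReal hdistu
        _ = b * ENNReal.ofReal c * edist x' x := by rw [mul_assoc]
      rw [ENNReal.div_le_iff_le_mul (Or.inl (edist_pos.2 hnex').ne') (Or.inl (edist_ne_top x' x))]
      exact hedist
    have hlim : lipNumOn F S x ≤ b * ENNReal.ofReal c := by
      rw [lipNumOn]
      exact Filter.limsup_le_of_le (by isBoundedDefault) hev6
    calc lipNumOn F S x ≤ b * ENNReal.ofReal c := hlim
    _ = ENNReal.ofReal ((L.toReal + δ) * c) := by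
        rw [hbdef, ← ENNReal.ofReal_mul (by linarith)]
  -- limit δ → 0
  have htends : Tendsto (fun δ : ℝ => ENNReal.ofReal ((L.toReal + δ) * (Real.sqrt j / r + δ)))
      (nhdsWithin 0 (Set.Ioi 0)) (nhds (ENNReal.ofReal (L.toReal * (Real.sqrt j / r)))) := by
    have h1 : ContinuousAt (fun δ : ℝ => (L.toReal + δ) * (Real.sqrt j / r + δ)) 0 := by
      fun_prop
    have h2 : Tendsto (fun δ : ℝ => (L.toReal + δ) * (Real.sqrt j / r + δ))
        (nhdsWithin 0 (Set.Ioi 0)) (nhds (L.toReal * (Real.sqrt j / r))) := by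
      have h2' : Tendsto (fun δ : ℝ => (L.toReal + δ) * (Real.sqrt j / r + δ))
          (nhdsWithin (0:ℝ) (Set.Ioi 0)) (nhds ((L.toReal + 0) * (Real.sqrt j / r + 0))) :=
        h1.tendsto.mono_left nhdsWithin_le_nhds
      simpa using h2'
    exact (ENNReal.continuous_ofReal.tendsto _).comp h2
  have hle : lipNumOn F S x ≤ ENNReal.ofReal (L.toReal * (Real.sqrt j / r)) := by
    apply ge_of_tendsto htends
    filter_upwards [self_mem_nhdsWithin] with δ hδ using key δ hδ
  calc lipNumOn F S x ≤ ENNReal.ofReal (L.toReal * (Real.sqrt j / r)) := hle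
  _ = ENNReal.ofReal (Real.sqrt j / r) * L := by
      rw [ENNReal.ofReal_mul ENNReal.toReal_nonneg, ENNReal.ofReal_toReal hL, mul_comm]

lemma infDist_cone {A : Set (EuclideanSpace ℝ (Fin j))} (hA : A.Nonempty)
    {x : EuclideanSpace ℝ (Fin j)} (hx1 : supNorm x ≤ 1) (hx0 : x ≠ 0) :
    Metric.infDist x {y | ∃ a ∈ A, ∃ t ∈ Set.Icc (0:ℝ) 1, y = t • a} ≤
      supNorm x * Metric.infDist ((supNorm x)⁻¹ • x) A := by
  have hr : 0 < supNorm x := supNorm_pos hx0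
  set r := supNorm x with hrdef
  set u : EuclideanSpace ℝ (Fin j) := r⁻¹ • x with hudef
  have hxu : x = r • u := (smul_inv_smul₀ hr.ne' x).symm
  clear_value r u
  set C : Set (EuclideanSpace ℝ (Fin j)) := {y | ∃ a ∈ A, ∃ t ∈ Set.Icc (0:ℝ) 1, y = t • a}
    with hCdef
  have hstep : ∀ a ∈ A, Metric.infDist x C ≤ r * dist u a := by
    intro a ha
    have hmem : r • a ∈ C := ⟨a, ha, r, ⟨hr.le, hx1⟩, rfl⟩
    calc Metric.infDist x C ≤ dist x (r • a) := Metric.infDist_le_dist_of_mem hmem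
    _ = r * dist u a := by
        rw [dist_eq_norm, hxu, ← smul_sub, norm_smul, Real.norm_eq_abs, abs_of_pos hr,
          dist_eq_norm]
  apply le_of_forall_pos_le_add
  intro ε hε
  have hlt : Metric.infDist u A < Metric.infDist u A + ε / r :=
    lt_add_of_pos_right _ (div_pos hε hr)
  obtain ⟨a, ha, hda⟩ := (Metric.infDist_lt_iff hA).1 hlt
  calc Metric.infDist x C ≤ r * dist u a := hstep a ha
  _ ≤ r * (Metric.infDist u A + ε / r) := mul_le_mul_of_nonneg_left hda.le hr.le
  _ = r * Metric.infDist u A + ε := by field_simp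

theorem stmt1 {j : ℕ} (hj : 2 ≤ j) {N : Type*} [MetricSpace N]
    (f F : EuclideanSpace ℝ (Fin j) → N)
    (A : Set (EuclideanSpace ℝ (Fin j)))
    (hA : A.Nonempty) (hAQ : A ⊆ {y | supNorm y = 1})
    (hF : ∀ x : EuclideanSpace ℝ (Fin j), x ≠ 0 → F x = f ((supNorm x)⁻¹ • x)) :
    (⨆ x ∈ {y : EuclideanSpace ℝ (Fin j) | supNorm y ≤ 1 ∧ y ≠ 0},
        ENNReal.ofReal
            (Metric.infDist x {y | ∃ a ∈ A, ∃ t ∈ Set.Icc (0:ℝ) 1, y = t • a}) *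
          lipNumOn F {y | supNorm y ≤ 1 ∧ y ≠ 0} x)
      ≤ ENNReal.ofReal (Real.sqrt j) *
        ⨆ y ∈ {y : EuclideanSpace ℝ (Fin j) | supNorm y = 1},
          ENNReal.ofReal (Metric.infDist y A) * lipNumOn f {z | supNorm z = 1} y := by
  apply iSup₂_le
  intro x hx
  obtain ⟨hx1, hx0⟩ := hx
  have hr : 0 < supNorm x := supNorm_pos hx0
  have hsj : 0 ≤ Real.sqrt j := Real.sqrt_nonneg _
  have hdn : 0 ≤ Metric.infDist ((supNorm x)⁻¹ • x) A := Metric.infDist_nonneg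
  have huB : ((supNorm x)⁻¹ • x) ∈ {y : EuclideanSpace ℝ (Fin j) | supNorm y = 1} :=
    supNorm_unit hx0
  calc ENNReal.ofReal
          (Metric.infDist x {y | ∃ a ∈ A, ∃ t ∈ Set.Icc (0:ℝ) 1, y = t • a}) *
        lipNumOn F {y | supNorm y ≤ 1 ∧ y ≠ 0} x
      ≤ ENNReal.ofReal (supNorm x * Metric.infDist ((supNorm x)⁻¹ • x) A) *
        (ENNReal.ofReal (Real.sqrt j / supNorm x) *
          lipNumOn f {z | supNorm z = 1} ((supNorm x)⁻¹ • x)) :=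
      mul_le_mul' (ENNReal.ofReal_le_ofReal (infDist_cone hA hx1 hx0))
        (lip_bound hj f F hF hx0)
  _ = ENNReal.ofReal (Real.sqrt j) *
        (ENNReal.ofReal (Metric.infDist ((supNorm x)⁻¹ • x) A) *
          lipNumOn f {z | supNorm z = 1} ((supNorm x)⁻¹ • x)) := by
      rw [← mul_assoc, ← ENNReal.ofReal_mul (by positivity),
        show supNorm x * Metric.infDist ((supNorm x)⁻¹ • x) A * (Real.sqrt j / supNorm x) =
          Real.sqrt j * Metric.infDist ((supNorm x)⁻¹ • x) A by field_simp,
        ENNReal.ofReal_mul hsj, mul_assoc]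
  _ ≤ ENNReal.ofReal (Real.sqrt j) *
        ⨆ y ∈ {y : EuclideanSpace ℝ (Fin j) | supNorm y = 1},
          ENNReal.ofReal (Metric.infDist y A) * lipNumOn f {z | supNorm z = 1} y := by
      apply mul_le_mul_right
      exact le_iSup₂ (f := fun y (_ : y ∈ {y : EuclideanSpace ℝ (Fin j) | supNorm y = 1}) =>
        ENNReal.ofReal (Metric.infDist y A) * lipNumOn f {z | supNorm z = 1} y)
        ((supNorm x)⁻¹ • x) huB
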